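/- Let a, b : ℕ → ℚ be functions such that for every positive integer d, a(d) = ∑_{e∣d} b(e) and ∑_{e∣d} b(e)·σ₁(d/e) = 5·(σ₃(d) − d·σ₁(d)), where the sums range over the positive divisors e of d. Then for every positive integer d, a(d) = 5d·( ∑_{e∣d} (σ₃(e)/e)·μ(d/e) − d ). -/

import Mathlib

open ArithmeticFunction Finset
open scoped ArithmeticFunction.zeta ArithmeticFunction.Moebius ArithmeticFunction.sigma

/-- σ_k(d): the sum of the k-th powers of the positive divisors of d. -/
def sigma' (k d : ℕ) : ℕ := ∑ e ∈ d.divisors, e ^ k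

lemma sigma'_eq (k d : ℕ) : sigma' k d = σ k d := by
  rw [sigma_apply]; rfl

lemma sum_moebius_div (n : ℕ) :
    (∑ e ∈ n.divisors, ((μ (n / e) : ℤ) : ℚ)) = if n = 1 then 1 else 0 := by
  have := congrArg (fun f : ArithmeticFunction ℚ => f n) (coe_zeta_mul_coe_moebius (R := ℚ))
  simp only [mul_apply] at this
  rw [Nat.sum_divisorsAntidiagonal (f := fun i j =>
    (↑ζ : ArithmeticFunction ℚ) i * (↑μ : ArithmeticFunction ℚ) j)] at this
  simp only [one_apply] at this
  rw [← this]
  apply Finset.sum_congr rfl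
  intro e he
  have he0 : e ≠ 0 := (Nat.pos_of_mem_divisors he).ne'
  simp [natCoe_apply, zeta_apply_ne he0, intCoe_apply]

noncomputable def gfun : ArithmeticFunction ℚ :=
  pmul (μ : ArithmeticFunction ℚ) ((pow 1 : ArithmeticFunction ℕ) : ArithmeticFunction ℚ)

lemma pow_one_mul_g : ((pow 1 : ArithmeticFunction ℕ) : ArithmeticFunction ℚ) * gfun = 1 := by
  ext n
  rw [mul_apply]
  rcases Nat.eq_zero_or_pos n with rfl | hn
  · simp
  rw [Nat.sum_divisorsAntidiagonal (f := fun i j =>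
    ((pow 1 : ArithmeticFunction ℕ) : ArithmeticFunction ℚ) i * gfun j)]
  have key := sum_moebius_div n
  rw [one_apply]
  calc ∑ e ∈ n.divisors, ((pow 1 : ArithmeticFunction ℕ) : ArithmeticFunction ℚ) e
        * gfun (n / e)
      = ∑ e ∈ n.divisors, (n : ℚ) * ((μ (n / e) : ℤ) : ℚ) := by
        apply Finset.sum_congr rfl
        intro e he
        have he0 : e ≠ 0 := (Nat.pos_of_mem_divisors he).ne'
        have hed : e ∣ n := Nat.dvd_of_mem_divisors he
        simp only [gfun, pmul_apply, natCoe_apply, pow_apply, intCoe_apply,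
          one_ne_zero, false_and, if_false, pow_one]
        have : (e : ℚ) * ((μ (n / e) : ℤ) * ((n / e : ℕ) : ℚ)) =
            ((e : ℚ) * ((n / e : ℕ) : ℚ)) * (μ (n / e) : ℤ) := by ring
        rw [this, ← Nat.cast_mul, Nat.mul_div_cancel' hed]
    _ = (n : ℚ) * (if n = 1 then 1 else 0) := by rw [← Finset.mul_sum, key]
    _ = if n = 1 then 1 else 0 := by split <;> simp_all

lemma sigma_one_mul_moebius :
    ((σ 1 : ArithmeticFunction ℕ) : ArithmeticFunction ℚ) * (μ : ArithmeticFunction ℚ)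
      = ((pow 1 : ArithmeticFunction ℕ) : ArithmeticFunction ℚ) := by
  rw [← zeta_mul_pow_eq_sigma, natCoe_mul, mul_comm (ζ : ArithmeticFunction ℚ), mul_assoc,
    coe_zeta_mul_coe_moebius, mul_one]

lemma sum_sigma_one_moebius {d : ℕ} (hd : 0 < d) :
    ∑ e ∈ d.divisors, ((σ 1 e : ℕ) : ℚ) * ((μ (d / e) : ℤ) : ℚ) = (d : ℚ) := by
  have := congrArg (fun f : ArithmeticFunction ℚ => f d) sigma_one_mul_moebius
  simp only [mul_apply] at this
  rw [Nat.sum_divisorsAntidiagonal (f := fun i j =>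
    (↑(σ 1) : ArithmeticFunction ℚ) i * (↑μ : ArithmeticFunction ℚ) j)] at this
  simp only [natCoe_apply, intCoe_apply, pow_apply, one_ne_zero, false_and, if_false,
    pow_one] at this
  rw [this]

/-- If `a(d) = ∑_{e ∣ d} b(e)` and `∑_{e ∣ d} b(e) σ₁(d/e) = 5 (σ₃(d) - d σ₁(d))` for
all positive `d`, then `a(d) = 5d (∑_{e ∣ d} (σ₃(e)/e) μ(d/e) - d)` for all positive `d`. -/
theorem enum_theorem (a b : ℕ → ℚ)
    (hab : ∀ d : ℕ, 0 < d → a d = ∑ e ∈ d.divisors, b e)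
    (hb : ∀ d : ℕ, 0 < d →
      ∑ e ∈ d.divisors, b e * (sigma' 1 (d / e) : ℚ) =
        5 * ((sigma' 3 d : ℚ) - (d : ℚ) * (sigma' 1 d : ℚ))) :
    ∀ d : ℕ, 0 < d →
      a d = 5 * (d : ℚ) *
        ((∑ e ∈ d.divisors,
          (sigma' 3 e : ℚ) / (e : ℚ) * (ArithmeticFunction.moebius (d / e) : ℚ)) - (d : ℚ)) := by
  set B : ArithmeticFunction ℚ := ⟨fun n => if n = 0 then 0 else b n, by simp⟩ with hB
  set C : ArithmeticFunction ℚ :=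
    ⟨fun n => 5 * ((sigma' 3 n : ℚ) - (n : ℚ) * (sigma' 1 n : ℚ)), by simp [sigma']⟩ with hC
  have hBs : B * ((σ 1 : ArithmeticFunction ℕ) : ArithmeticFunction ℚ) = C := by
    ext n
    rcases Nat.eq_zero_or_pos n with rfl | hn
    · simp
    rw [mul_apply, Nat.sum_divisorsAntidiagonal (f := fun i j =>
      B i * (↑(σ 1) : ArithmeticFunction ℚ) j)]
    have : ∑ e ∈ n.divisors, B e * (↑(σ 1) : ArithmeticFunction ℚ) (n / e)
        = ∑ e ∈ n.divisors, b e * (sigma' 1 (n / e) : ℚ) := by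
      apply Finset.sum_congr rfl
      intro e he
      have he0 : e ≠ 0 := (Nat.pos_of_mem_divisors he).ne'
      simp [hB, he0, natCoe_apply, ← sigma'_eq]
    rw [this, hb n hn]
    rfl
  have hA : B * (ζ : ArithmeticFunction ℚ) = C * gfun := by
    have h1 : (B * (ζ : ArithmeticFunction ℚ)) *
        ((pow 1 : ArithmeticFunction ℕ) : ArithmeticFunction ℚ) = C := by
      rw [mul_assoc, ← natCoe_mul, zeta_mul_pow_eq_sigma, hBs]
    calc B * (ζ : ArithmeticFunction ℚ)
        = (B * (ζ : ArithmeticFunction ℚ)) *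
            (((pow 1 : ArithmeticFunction ℕ) : ArithmeticFunction ℚ) * gfun) := by
          rw [pow_one_mul_g, mul_one]
      _ = C * gfun := by rw [← mul_assoc, h1]
  intro d hd
  have haB : a d = (B * (ζ : ArithmeticFunction ℚ)) d := by
    rw [coe_mul_zeta_apply, hab d hd]
    apply Finset.sum_congr rfl
    intro e he
    have he0 : e ≠ 0 := (Nat.pos_of_mem_divisors he).ne'
    simp [hB, he0]
  rw [haB, hA, mul_apply, Nat.sum_divisorsAntidiagonal (f := fun i j => C i * gfun j)]
  have hterm : ∑ e ∈ d.divisors, C e * gfun (d / e)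
      = ∑ e ∈ d.divisors, (5 * (d : ℚ) * ((sigma' 3 e : ℚ) / (e : ℚ) * ((μ (d / e) : ℤ) : ℚ))
        - 5 * (d : ℚ) * (((σ 1 e : ℕ) : ℚ) * ((μ (d / e) : ℤ) : ℚ))) := by
    apply Finset.sum_congr rfl
    intro e he
    have he0 : (e : ℚ) ≠ 0 := Nat.cast_ne_zero.mpr (Nat.pos_of_mem_divisors he).ne'
    have hed : e ∣ d := Nat.dvd_of_mem_divisors he
    have hde : ((d / e : ℕ) : ℚ) = (d : ℚ) / (e : ℚ) := by
      rw [Nat.cast_div hed he0]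
    simp only [hC, gfun, pmul_apply, natCoe_apply, intCoe_apply, pow_apply,
      one_ne_zero, false_and, if_false, pow_one, coe_mk, hde, ← sigma'_eq]
    field_simp
  rw [hterm, Finset.sum_sub_distrib, ← Finset.mul_sum, ← Finset.mul_sum,
    sum_sigma_one_moebius hd]
  ring
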